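/- For λ > 0 and m > 0 with √λ|J| < m, define Q₀ = (|J|/(√λ m))^{1/2} / (1 − √λ|J|/m). Then the extremal Kerr–Newman–AdS mass m_ext(J,Q) (the infimum over A > 0 of F₁ + λF₂ from the Smarr formula) satisfies m_ext ≥ m_bps := √λ|J| + |Q|, with equality if and only if |Q| = Q₀. -/

import Mathlib

noncomputable def F1 (J Q A : ℝ) : ℝ :=
  A / (16 * Real.pi) + (Real.pi / A) * (4 * J ^ 2 + Q ^ 4) + Q ^ 2 / 2

noncomputable def F2 (lam J Q A : ℝ) : ℝ :=
  J ^ 2 + (A / (8 * Real.pi)) *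
    (Q ^ 2 + A / (4 * Real.pi) + lam * A ^ 2 / (32 * Real.pi ^ 2))

/-- The extremal Kerr–Newman–AdS mass: `m_ext² = inf_{A>0} (F₁ + λF₂)`. -/
noncomputable def mextJQ (lam J Q : ℝ) : ℝ :=
  Real.sqrt (sInf {x | ∃ A > 0, x = F1 J Q A + lam * F2 lam J Q A})

noncomputable def psiKN (lam J Q x : ℝ) : ℝ :=
  x / 4 + (4 * J ^ 2 + Q ^ 4) / (4 * x) + Q ^ 2 / 2 + lam * J ^ 2
    + lam * x * Q ^ 2 / 2 + lam * x ^ 2 / 2 + lam ^ 2 * x ^ 3 / 4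

lemma G_eq_psiKN (lam J Q A : ℝ) (hA : A ≠ 0) :
    F1 J Q A + lam * F2 lam J Q A = psiKN lam J Q (A / (4 * Real.pi)) := by
  have hpi := Real.pi_ne_zero
  unfold F1 F2 psiKN
  field_simp
  ring

lemma keyIdent (lam J Q x : ℝ) (hlam : 0 ≤ lam) (hx : x ≠ 0) :
    psiKN lam J Q x = (Real.sqrt lam * |J| + |Q|)^2
      + ((x + lam*x^2 - |Q|^2)^2 + 4*(|J| - Real.sqrt lam*x*|Q|)^2) / (4*x) := by
  set t := Real.sqrt lam with ht
  have h2 : lam = t^2 := (Real.sq_sqrt hlam).symm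
  have hJ : J^2 = |J|^2 := (sq_abs J).symm
  have hQ : Q^2 = |Q|^2 := (sq_abs Q).symm
  have hQ4 : Q^4 = |Q|^4 := by
    rw [show (4:ℕ) = 2*2 from rfl, pow_mul, pow_mul, hQ]
  unfold psiKN
  rw [h2]
  rw [hQ4, hQ, hJ]
  field_simp
  ring

lemma psiKN_mem (lam J Q x : ℝ) (hx : 0 < x) :
    psiKN lam J Q x ∈ {y | ∃ A > 0, y = F1 J Q A + lam * F2 lam J Q A} := by
  refine ⟨4 * Real.pi * x, by positivity, ?_⟩
  rw [G_eq_psiKN lam J Q _ (by positivity)]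
  have h : 4 * Real.pi * x / (4 * Real.pi) = x := by
    have := Real.pi_ne_zero
    field_simp
  rw [h]

lemma mem_psiKN (lam J Q z : ℝ)
    (hz : z ∈ {y | ∃ A > 0, y = F1 J Q A + lam * F2 lam J Q A}) :
    ∃ x > 0, z = psiKN lam J Q x := by
  obtain ⟨A, hA, rfl⟩ := hz
  exact ⟨A / (4 * Real.pi), by positivity, G_eq_psiKN lam J Q A (ne_of_gt hA)⟩

lemma psiKN_ge (lam J Q x : ℝ) (hlam : 0 ≤ lam) (hx : 0 < x) :
    (Real.sqrt lam * |J| + |Q|)^2 ≤ psiKN lam J Q x := by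
  rw [keyIdent lam J Q x hlam (ne_of_gt hx)]
  have : 0 ≤ ((x + lam*x^2 - |Q|^2)^2 + 4*(|J| - Real.sqrt lam*x*|Q|)^2) / (4*x) := by
    positivity
  linarith

lemma psiKN_bddBelow (lam J Q : ℝ) (hlam : 0 ≤ lam) :
    BddBelow {y | ∃ A > 0, y = F1 J Q A + lam * F2 lam J Q A} := by
  refine ⟨(Real.sqrt lam * |J| + |Q|)^2, fun z hz => ?_⟩
  obtain ⟨x, hx, rfl⟩ := mem_psiKN lam J Q z hz
  exact psiKN_ge lam J Q x hlam hx

lemma psiKN_ge_c0 (lam J Q x : ℝ) (hlam : 0 ≤ lam) (hx : 0 < x) :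
    (4 * J ^ 2 + Q ^ 4) / (4 * x) ≤ psiKN lam J Q x := by
  unfold psiKN
  nlinarith [sq_nonneg J, sq_nonneg Q, sq_nonneg x, mul_nonneg hlam (sq_nonneg J),
    mul_nonneg (mul_nonneg hlam hx.le) (sq_nonneg Q),
    mul_nonneg hlam (sq_nonneg x), mul_nonneg (mul_nonneg hlam hlam) (pow_nonneg hx.le 3),
    pow_nonneg (abs_nonneg Q) 4]

lemma psiKN_ge_quarter (lam J Q x : ℝ) (hlam : 0 ≤ lam) (hx : 0 < x) :
    x / 4 ≤ psiKN lam J Q x := by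
  unfold psiKN
  have h0 : 0 ≤ (4 * J ^ 2 + Q ^ 4) / (4 * x) := by positivity
  nlinarith [sq_nonneg J, sq_nonneg Q, mul_nonneg hlam (sq_nonneg J),
    mul_nonneg (mul_nonneg hlam hx.le) (sq_nonneg Q),
    mul_nonneg hlam (sq_nonneg x), mul_nonneg (mul_nonneg hlam hlam) (pow_nonneg hx.le 3)]

lemma psiKN_attains (lam J Q : ℝ) (hlam : 0 < lam) (hc0 : 0 < 4 * J ^ 2 + Q ^ 4) :
    ∃ x > 0, sInf {y | ∃ A > 0, y = F1 J Q A + lam * F2 lam J Q A} = psiKN lam J Q x := by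
  set c0 := 4 * J ^ 2 + Q ^ 4 with hc0def
  set K := psiKN lam J Q 1 + 1 with hK
  have hpsi1 : c0 / 4 + 1/4 ≤ psiKN lam J Q 1 := by
    unfold psiKN
    norm_num
    nlinarith [sq_nonneg J, sq_nonneg Q, mul_nonneg hlam.le (sq_nonneg J),
      mul_nonneg hlam.le (sq_nonneg Q), hlam.le, mul_pos hlam hlam]
  have hKpos : 0 < K := by nlinarith
  set a := c0 / (4 * K) with ha
  set b := 4 * K with hb
  have hapos : 0 < a := by positivity
  have ha1 : a ≤ 1 := by
    rw [ha, div_le_one (by positivity)]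
    nlinarith
  have h1b : (1:ℝ) ≤ b := by nlinarith
  have hmem1 : (1:ℝ) ∈ Set.Icc a b := ⟨ha1, h1b⟩
  have hcont : ContinuousOn (psiKN lam J Q) (Set.Icc a b) := by
    have hne : ∀ x ∈ Set.Icc a b, (4:ℝ) * x ≠ 0 := by
      intro x hx
      have : 0 < x := lt_of_lt_of_le hapos hx.1
      positivity
    unfold psiKN
    refine ContinuousOn.add (ContinuousOn.add (ContinuousOn.add (ContinuousOn.add
      (ContinuousOn.add (ContinuousOn.add ?_ ?_) ?_) ?_) ?_) ?_) ?_
    · exact (continuous_id.div_const 4).continuousOn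
    · exact ContinuousOn.div continuousOn_const
        ((continuous_const.mul continuous_id).continuousOn) hne
    all_goals exact Continuous.continuousOn (by fun_prop)
  obtain ⟨z, hzmem, hzmin'⟩ := isCompact_Icc.exists_isMinOn ⟨1, hmem1⟩ hcont
  have hzmin := isMinOn_iff.mp hzmin'
  have hz0 : 0 < z := lt_of_lt_of_le hapos hzmem.1
  have hglob : ∀ y, 0 < y → psiKN lam J Q z ≤ psiKN lam J Q y := by
    intro y hy
    have hz1 : psiKN lam J Q z ≤ psiKN lam J Q 1 := hzmin 1 hmem1
    rcases lt_or_ge y a with hya | hay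
    · have h1 : c0 / (4 * y) ≤ psiKN lam J Q y := psiKN_ge_c0 lam J Q y hlam.le hy
      have h2 : c0 / (4 * a) < c0 / (4 * y) := by
        apply div_lt_div_of_pos_left hc0 (by positivity) (by nlinarith)
      have h3 : c0 / (4 * a) = K := by
        rw [ha, hb]
        field_simp
      nlinarith
    rcases le_or_gt y b with hyb | hby
    · exact hzmin y ⟨hay, hyb⟩
    · have h1 : y / 4 ≤ psiKN lam J Q y := psiKN_ge_quarter lam J Q y hlam.le hy
      have : K < y / 4 := by rw [hb] at hby; linarith
      nlinarith
  refine ⟨z, hz0, le_antisymm (csInf_le (psiKN_bddBelow lam J Q hlam.le)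
    (psiKN_mem lam J Q z hz0)) ?_⟩
  apply le_csInf ⟨psiKN lam J Q 1, psiKN_mem lam J Q 1 one_pos⟩
  intro w hw
  obtain ⟨x, hx, rfl⟩ := mem_psiKN lam J Q w hw
  exact hglob x hx

lemma psiKN_degenerate (lam : ℝ) (hlam : 0 < lam) :
    sInf {y | ∃ A > 0, y = F1 0 0 A + lam * F2 lam 0 0 A} ≤ 0 := by
  by_contra h
  push_neg at h
  set I := sInf {y | ∃ A > 0, y = F1 0 0 A + lam * F2 lam 0 0 A} with hI
  set C := 1/4 + lam/2 + lam^2/4 with hC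
  have hCpos : 0 < C := by positivity
  set x := min 1 (I / (2 * C)) with hx
  have hxpos : 0 < x := lt_min one_pos (by positivity)
  have hx1 : x ≤ 1 := min_le_left _ _
  have hx2 : x ≤ I / (2 * C) := min_le_right _ _
  have hle : I ≤ psiKN lam 0 0 x :=
    csInf_le (psiKN_bddBelow lam 0 0 hlam.le) (psiKN_mem lam 0 0 x hxpos)
  have hpsi : psiKN lam 0 0 x ≤ C * x := by
    unfold psiKN
    rw [hC]
    have h2 : x^2 ≤ x := by nlinarith
    have h3 : x^3 ≤ x := by nlinarith
    norm_num
    nlinarith [mul_nonneg hlam.le (sub_nonneg.mpr h2),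
      mul_nonneg (mul_nonneg hlam.le hlam.le) (sub_nonneg.mpr h3)]
  have hCx : C * x ≤ I / 2 := by
    calc C * x ≤ C * (I / (2*C)) := by nlinarith
      _ = I / 2 := by field_simp
  have hfin : I ≤ I / 2 := le_trans hle (le_trans hpsi hCx)
  linarith

lemma mext_sq (lam J Q : ℝ) (hlam : 0 < lam) :
    mextJQ lam J Q ^ 2 = sInf {x | ∃ A > 0, x = F1 J Q A + lam * F2 lam J Q A} := by
  have hInf_ge : (Real.sqrt lam * |J| + |Q|) ^ 2
      ≤ sInf {x | ∃ A > 0, x = F1 J Q A + lam * F2 lam J Q A} := by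
    apply le_csInf ⟨psiKN lam J Q 1, psiKN_mem lam J Q 1 one_pos⟩
    intro w hw
    obtain ⟨x, hx, rfl⟩ := mem_psiKN lam J Q w hw
    exact psiKN_ge lam J Q x hlam.le hx
  have hInf0 : 0 ≤ sInf {x | ∃ A > 0, x = F1 J Q A + lam * F2 lam J Q A} :=
    le_trans (by positivity) hInf_ge
  exact Real.sq_sqrt hInf0

lemma mext_part1 (lam J Q : ℝ) (hlam : 0 < lam) :
    Real.sqrt lam * |J| + |Q| ≤ mextJQ lam J Q := by
  have hInf_ge : (Real.sqrt lam * |J| + |Q|) ^ 2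
      ≤ sInf {x | ∃ A > 0, x = F1 J Q A + lam * F2 lam J Q A} := by
    apply le_csInf ⟨psiKN lam J Q 1, psiKN_mem lam J Q 1 one_pos⟩
    intro w hw
    obtain ⟨x, hx, rfl⟩ := mem_psiKN lam J Q w hw
    exact psiKN_ge lam J Q x hlam.le hx
  calc Real.sqrt lam * |J| + |Q|
      = Real.sqrt ((Real.sqrt lam * |J| + |Q|) ^ 2) := (Real.sqrt_sq (by positivity)).symm
    _ ≤ mextJQ lam J Q := Real.sqrt_le_sqrt hInf_ge

lemma mext_le (lam J Q : ℝ) (hlam : 0 < lam) :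
    ∀ y : ℝ, 0 < y → mextJQ lam J Q ^ 2 ≤ psiKN lam J Q y := by
  intro y hy
  rw [mext_sq lam J Q hlam]
  exact csInf_le (psiKN_bddBelow lam J Q hlam.le) (psiKN_mem lam J Q y hy)

lemma mext_min (lam J Q : ℝ) (hlam : 0 < lam) (hc0 : 0 < 4 * J ^ 2 + Q ^ 4) :
    ∃ x > 0, mextJQ lam J Q ^ 2 = psiKN lam J Q x := by
  obtain ⟨x, hx, hSx⟩ := psiKN_attains lam J Q hlam hc0
  exact ⟨x, hx, by rw [mext_sq lam J Q hlam]; exact hSx⟩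

lemma mext_deg (lam : ℝ) (hlam : 0 < lam) : mextJQ lam 0 0 = 0 := by
  unfold mextJQ
  have h0 := psiKN_degenerate lam hlam
  exact Real.sqrt_eq_zero_of_nonpos h0

set_option maxHeartbeats 1600000 in
/-- Comparison of the extremal mass with the BPS bound `m_bps = √λ|J| + |Q|`:
`m_ext ≥ m_bps` with equality iff `|Q| = Q₀ = (|J|/(√λ m))^{1/2}/(1 − √λ|J|/m)`,
where `m = m_ext`. -/
theorem stmt19 (lam J Q : ℝ) (hlam : 0 < lam)
    (hm : 0 < mextJQ lam J Q) (hJm : Real.sqrt lam * |J| < mextJQ lam J Q) :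
    Real.sqrt lam * |J| + |Q| ≤ mextJQ lam J Q ∧
      (mextJQ lam J Q = Real.sqrt lam * |J| + |Q| ↔
        |Q| = Real.sqrt (|J| / (Real.sqrt lam * mextJQ lam J Q)) /
          (1 - Real.sqrt lam * |J| / mextJQ lam J Q)) := by
  have hdeg : ¬(J = 0 ∧ Q = 0) := by
    rintro ⟨rfl, rfl⟩
    rw [mext_deg lam hlam] at hm
    exact lt_irrefl 0 hm
  have hc0 : 0 < 4 * J ^ 2 + Q ^ 4 := by
    rcases lt_or_ge 0 (4 * J ^ 2 + Q ^ 4) with h | h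
    · exact h
    · exfalso
      apply hdeg
      have hJ2 : (0:ℝ) ≤ J ^ 2 := sq_nonneg J
      have hQ4 : (0:ℝ) ≤ Q ^ 4 := by positivity
      constructor
      · have hJ20 : J ^ 2 = 0 := by nlinarith
        exact pow_eq_zero_iff (by norm_num : (2:ℕ) ≠ 0) |>.mp hJ20
      · have hQ40 : Q ^ 4 = 0 := by nlinarith
        exact pow_eq_zero_iff (by norm_num : (4:ℕ) ≠ 0) |>.mp hQ40
  have part1 := mext_part1 lam J Q hlam
  obtain ⟨x, hxpos, hmin⟩ := mext_min lam J Q hlam hc0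
  have hle := mext_le lam J Q hlam
  have hident := fun (y : ℝ) (hy : y ≠ 0) => keyIdent lam J Q y hlam.le hy
  set t := Real.sqrt lam with htdef
  have ht : 0 < t := Real.sqrt_pos.mpr hlam
  have ht2 : t ^ 2 = lam := Real.sq_sqrt hlam.le
  set j := |J| with hjdef
  set q := |Q| with hqdef
  have hj0 : 0 ≤ j := abs_nonneg J
  have hq0 : 0 ≤ q := abs_nonneg Q
  set m := mextJQ lam J Q with hmdef
  have hQabs : Q = 0 ↔ q = 0 := by rw [hqdef, abs_eq_zero]
  have hJabs : J = 0 ↔ j = 0 := by rw [hjdef, abs_eq_zero]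
  clear_value t j q m
  -- replace lam by t^2 in psiKN facts
  rw [← ht2] at hmin hle hident
  refine ⟨part1, ?_, ?_⟩
  · -- forward: m = t*j + q → q = ...
    intro heq
    have hquad : psiKN (t^2) J Q x = (t * j + q) ^ 2 := by rw [← hmin, heq]
    rw [hident x (ne_of_gt hxpos)] at hquad
    have h4x : (0:ℝ) < 4 * x := by linarith
    have hzero : (x + t^2 * x ^ 2 - q ^ 2) ^ 2 + 4 * (j - t * x * q) ^ 2 = 0 := by
      have hd : ((x + t^2*x^2 - q^2)^2 + 4*(j - t*x*q)^2) / (4*x) = 0 := by linarith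
      have := (div_eq_zero_iff.mp hd).resolve_right (ne_of_gt h4x)
      linarith
    have halpha : x + t^2 * x ^ 2 - q ^ 2 = 0 := by
      nlinarith [sq_nonneg (x + t^2*x^2 - q^2), sq_nonneg (j - t*x*q)]
    have hbeta : j - t * x * q = 0 := by
      nlinarith [sq_nonneg (x + t^2*x^2 - q^2), sq_nonneg (j - t*x*q)]
    have hqpos : 0 < q := by
      rcases hq0.lt_or_eq with h | h
      · exact h
      · exfalso; rw [← h] at halpha; nlinarith
    have hmpos : 0 < m := hm
    have hxm : x * m = q ^ 3 := by
      have hjx : j = t * x * q := by linarith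
      rw [heq, hjx]
      nlinarith [halpha]
    have h1 : 1 - t * j / m = q / m := by
      rw [heq]
      field_simp
      ring
    have h2 : j / (t * m) = (q ^ 2 / m) ^ 2 := by
      have hjx : j = t * x * q := by linarith
      rw [hjx]
      field_simp
      linear_combination hxm
    rw [h1, h2, Real.sqrt_sq (by positivity)]
    field_simp
  · -- converse
    intro hQeq
    have hmt : 0 < m - t * j := sub_pos.mpr hJm
    have h1pos : 0 < 1 - t * j / m := by
      rw [sub_pos, div_lt_one hm]
      exact hJm
    have hc : q * (1 - t * j / m) = Real.sqrt (j / (t * m)) := by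
      rw [hQeq]
      exact div_mul_cancel₀ _ h1pos.ne'
    have hsq : q ^ 2 * (1 - t * j / m) ^ 2 = j / (t * m) := by
      have h := congrArg (fun y => y ^ 2) hc
      simp only [mul_pow] at h
      rw [Real.sq_sqrt (by positivity)] at h
      exact h
    rcases hj0.lt_or_eq with hjpos | hjzero
    · -- j > 0
      have hm0 : m ≠ 0 := ne_of_gt hm
      have ht0 : t ≠ 0 := ne_of_gt ht
      have hmtne : m - j * t ≠ 0 := by rw [mul_comm]; exact hmt.ne'
      have hR : t * q ^ 2 * (m - t * j) ^ 2 = j * m := by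
        field_simp at hsq
        nlinarith [hsq]
      have hqpos : 0 < q := by
        rcases hq0.lt_or_eq with h | h
        · exact h
        · exfalso; rw [← h] at hR; nlinarith [mul_pos hjpos hm]
      set x0 := j / (t * (m - t * j)) with hx0def
      have hx0 : 0 < x0 := by positivity
      have hley : m ^ 2 ≤ psiKN (t^2) J Q x0 := hle x0 hx0
      rw [hident x0 (ne_of_gt hx0)] at hley
      have halpha : x0 + t^2 * x0 ^ 2 - q ^ 2 = 0 := by
        rw [hx0def]
        field_simp
        nlinarith [hR]
      have hbeta : j - t * x0 * q = j * (m - t * j - q) / (m - t * j) := by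
        rw [hx0def]
        field_simp
      have he0 : 0 ≤ m - t * j - q := by linarith
      have hnum : ((x0 + t^2*x0^2 - q^2)^2 + 4*(j - t*x0*q)^2) / (4*x0)
          = t * j * (m - t * j - q) ^ 2 / (m - t * j) := by
        rw [halpha, hbeta, hx0def]
        field_simp
        ring
      rw [hnum] at hley
      have hefin : m - t * j - q = 0 := by
        by_contra hne
        have hepos : 0 < m - t * j - q := lt_of_le_of_ne he0 (Ne.symm hne)
        have h5 : (m ^ 2 - (t*j+q)^2) * (m - t * j) ≤ t * j * (m - t*j - q) ^ 2 := by
          rw [← le_div_iff₀ hmt]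
          linarith [hley]
        nlinarith [h5, mul_pos (mul_pos hepos hm) (show 0 < m + q - t*j by linarith)]
      linarith
    · -- j = 0
      exfalso
      have hj' : j = 0 := hjzero.symm
      have hq' : q = 0 := by
        rw [hQeq, hj']
        simp
      exact hdeg ⟨hJabs.mpr hj', hQabs.mpr hq'⟩
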